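/- Let R and m be positive integers, Q a real m×R matrix, κ' and κ'' diagonal real matrices with strictly positive entries of sizes R×R and m×m, and κ = diag(κ',κ''). Let Y = I + QᵀQ (an invertible R×R matrix) and let Q_r = (Q, −I) be the m×(R+m) block-row matrix. Then Q_rQ_rᵀ = I + QQᵀ is invertible and −κ + 2κ^{1/2} [[Y⁻¹, Y⁻¹Qᵀ],[QY⁻¹, QY⁻¹Qᵀ]] κ^{1/2} = κ − 2κ^{1/2} Q_rᵀ (Q_r Q_rᵀ)⁻¹ Q_r κ^{1/2}. -/

import Mathlib

open Matrix

/-- Paper's identity (55) of Corollary 1: with `Y = I + QᵀQ` and the row block matrix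
`Q_r = (Q, -I)`, one has `Q_rQ_rᵀ = I + QQᵀ` invertible and
`-κ + 2κ^{1/2}[[Y⁻¹, Y⁻¹Qᵀ],[QY⁻¹, QY⁻¹Qᵀ]]κ^{1/2}
  = κ - 2κ^{1/2}Q_rᵀ(Q_rQ_rᵀ)⁻¹Q_rκ^{1/2}`. -/
theorem cor1_row_form
    (R m : ℕ) (hR : 0 < R) (hm : 0 < m)
    (κ' : Fin R → ℝ) (κ'' : Fin m → ℝ)
    (hκ' : ∀ i, 0 < κ' i) (hκ'' : ∀ j, 0 < κ'' j)
    (Q : Matrix (Fin m) (Fin R) ℝ) :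
    let κv : Fin R ⊕ Fin m → ℝ := Sum.elim κ' κ''
    let sq : Matrix (Fin R ⊕ Fin m) (Fin R ⊕ Fin m) ℝ :=
      diagonal (fun i => Real.sqrt (κv i))
    let Y : Matrix (Fin R) (Fin R) ℝ := 1 + Qᵀ * Q
    let Qr : Matrix (Fin m) (Fin R ⊕ Fin m) ℝ := fromCols Q (-1)
    IsUnit Y ∧
    Qr * Qrᵀ = 1 + Q * Qᵀ ∧
    IsUnit (Qr * Qrᵀ) ∧
    -(diagonal κv) +
        (2 : ℝ) • (sq * fromBlocks Y⁻¹ (Y⁻¹ * Qᵀ) (Q * Y⁻¹) (Q * Y⁻¹ * Qᵀ) * sq)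
      = diagonal κv - (2 : ℝ) • (sq * Qrᵀ * (Qr * Qrᵀ)⁻¹ * Qr * sq) := by
  intro κv sq Y Qr
  -- Y = 1 + QᵀQ is positive definite, hence invertible
  have hQt : Qᵀ = Qᴴ := by
    ext i j; simp [conjTranspose_apply]
  have hYpd : Y.PosDef := by
    have := Matrix.PosDef.add_posSemidef (Matrix.PosDef.one (n := Fin R) (R := ℝ))
      (Matrix.posSemidef_conjTranspose_mul_self (R := ℝ) Q)
    simpa [Y, ← hQt] using this
  have hY : IsUnit Y := hYpd.isUnit
  -- Qr Qrᵀ = 1 + QQᵀ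
  have hQrT : Qrᵀ = fromRows Qᵀ (-1) := by
    simp [Qr, transpose_fromCols]
  have hQr : Qr * Qrᵀ = 1 + Q * Qᵀ := by
    rw [hQrT]
    simp [Qr, fromCols_mul_fromRows, add_comm]
  have hMpd : (Qr * Qrᵀ).PosDef := by
    rw [hQr]
    have := Matrix.PosDef.add_posSemidef (Matrix.PosDef.one (n := Fin m) (R := ℝ))
      (Matrix.posSemidef_self_mul_conjTranspose (R := ℝ) Q)
    simpa [← hQt] using this
  have hM : IsUnit (Qr * Qrᵀ) := hMpd.isUnit
  refine ⟨hY, hQr, hM, ?_⟩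
  set M : Matrix (Fin m) (Fin m) ℝ := 1 + Q * Qᵀ with hMdef
  have hMunit : IsUnit M := hQr ▸ hM
  have hYdet : IsUnit Y.det := (Matrix.isUnit_iff_isUnit_det Y).mp hY
  have hMdet : IsUnit M.det := (Matrix.isUnit_iff_isUnit_det M).mp hMunit
  have hYinv : Y⁻¹ * Y = 1 := nonsing_inv_mul _ hYdet
  have hYinv' : Y * Y⁻¹ = 1 := mul_nonsing_inv _ hYdet
  have hMinv : M⁻¹ * M = 1 := nonsing_inv_mul _ hMdet
  have hMinv' : M * M⁻¹ = 1 := mul_nonsing_inv _ hMdet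
  -- push-through identities
  have hcomm : Y * Qᵀ = Qᵀ * M := by
    show (1 + Qᵀ * Q) * Qᵀ = Qᵀ * M
    rw [hMdef]
    simp [Matrix.add_mul, Matrix.mul_add, Matrix.mul_assoc]
  have hpush : Qᵀ * M⁻¹ = Y⁻¹ * Qᵀ := by
    calc Qᵀ * M⁻¹ = Y⁻¹ * (Y * Qᵀ) * M⁻¹ := by
          rw [← Matrix.mul_assoc, hYinv, Matrix.one_mul]
      _ = Y⁻¹ * (Qᵀ * M) * M⁻¹ := by rw [hcomm]
      _ = Y⁻¹ * Qᵀ * (M * M⁻¹) := by simp only [Matrix.mul_assoc]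
      _ = Y⁻¹ * Qᵀ := by rw [hMinv', Matrix.mul_one]
  have hcomm' : M * Q = Q * Y := by
    show M * Q = Q * (1 + Qᵀ * Q)
    rw [hMdef]
    simp [Matrix.add_mul, Matrix.mul_add, Matrix.mul_assoc]
  have hpush' : M⁻¹ * Q = Q * Y⁻¹ := by
    calc M⁻¹ * Q = M⁻¹ * (Q * Y) * Y⁻¹ := by
          rw [Matrix.mul_assoc, Matrix.mul_assoc, hYinv', Matrix.mul_one]
      _ = M⁻¹ * (M * Q) * Y⁻¹ := by rw [hcomm']
      _ = (M⁻¹ * M) * Q * Y⁻¹ := by simp only [Matrix.mul_assoc]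
      _ = Q * Y⁻¹ := by rw [hMinv, Matrix.one_mul]
  -- the projector identity : B + Qrᵀ (Qr Qrᵀ)⁻¹ Qr = 1
  have hP : Qrᵀ * (Qr * Qrᵀ)⁻¹ * Qr
      = fromBlocks (Y⁻¹ * Qᵀ * Q) (-(Y⁻¹ * Qᵀ)) (-(Q * Y⁻¹)) M⁻¹ := by
    rw [hQr, hQrT, show Qr = fromCols Q (-1) from rfl]
    rw [fromRows_mul, fromRows_mul_fromCols]
    simp [hpush, hpush', Matrix.neg_mul, Matrix.mul_neg]
  have hBP : fromBlocks Y⁻¹ (Y⁻¹ * Qᵀ) (Q * Y⁻¹) (Q * Y⁻¹ * Qᵀ)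
      + Qrᵀ * (Qr * Qrᵀ)⁻¹ * Qr = 1 := by
    have h11 : Y⁻¹ + Y⁻¹ * Qᵀ * Q = 1 := by
      calc Y⁻¹ + Y⁻¹ * Qᵀ * Q = Y⁻¹ * (1 + Qᵀ * Q) := by
            rw [Matrix.mul_add, Matrix.mul_one, Matrix.mul_assoc]
        _ = 1 := hYinv
    have h22 : Q * Y⁻¹ * Qᵀ + M⁻¹ = 1 := by
      calc Q * Y⁻¹ * Qᵀ + M⁻¹ = Q * (Qᵀ * M⁻¹) + M⁻¹ := by
            rw [hpush, Matrix.mul_assoc]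
        _ = M * M⁻¹ := by
            rw [hMdef, Matrix.add_mul, Matrix.one_mul, Matrix.mul_assoc, add_comm]
        _ = 1 := hMinv'
    rw [hP, fromBlocks_add, h11, h22, add_neg_cancel, add_neg_cancel,
      fromBlocks_one]
  -- sq * sq = diagonal κv
  have hpos : ∀ i, 0 ≤ κv i := by
    rintro (i | j)
    exacts [le_of_lt (hκ' i), le_of_lt (hκ'' j)]
  have hSS : sq * sq = diagonal κv := by
    show diagonal _ * diagonal _ = _
    rw [diagonal_mul_diagonal]
    have : (fun i => Real.sqrt (κv i) * Real.sqrt (κv i)) = κv :=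
      funext fun i => Real.mul_self_sqrt (hpos i)
    rw [this]
  -- combine
  have key : sq * fromBlocks Y⁻¹ (Y⁻¹ * Qᵀ) (Q * Y⁻¹) (Q * Y⁻¹ * Qᵀ) * sq
      = diagonal κv - sq * Qrᵀ * (Qr * Qrᵀ)⁻¹ * Qr * sq := by
    have h2 : sq * Qrᵀ * (Qr * Qrᵀ)⁻¹ * Qr * sq
        = sq * (Qrᵀ * (Qr * Qrᵀ)⁻¹ * Qr) * sq := by
      simp only [Matrix.mul_assoc]
    rw [h2, eq_sub_iff_add_eq, ← Matrix.add_mul, ← Matrix.mul_add, hBP,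
      Matrix.mul_one, hSS]
  rw [key, smul_sub]
  module
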